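/- E_max satisfies the density condition: for every finite binary string x, the sum of 2^{−E_max(X)} over all finite lists X of at least two finite binary strings, not all equal, with x ∈ X and E_max(X) > 0, is at most 1. -/

import Mathlib

open scoped ENNReal

/-- Finite binary strings. -/
abbrev BStr := List Bool

/-- A reference universal prefix Turing machine: a partial computable map from
(program, auxiliary information) to output, whose set of halting programs is
prefix-free (for each auxiliary input), and which is universal among all such
prefix machines up to an additive constant in program length. -/
structure UniversalPrefixMachine where
  U : BStr → ℕ →. ℕ
  partrec : Partrec₂ U
  prefixFree : ∀ (y : ℕ) (p q : BStr), p <+: q → (U p y).Dom → (U q y).Dom → p = q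
  universal : ∀ M : BStr → ℕ →. ℕ, Partrec₂ M →
    (∀ (y : ℕ) (p q : BStr), p <+: q → (M p y).Dom → (M q y).Dom → p = q) →
    ∃ c : ℕ, ∀ (p : BStr) (y x : ℕ), x ∈ M p y →
      ∃ q : BStr, x ∈ U q y ∧ q.length ≤ p.length + c

namespace UniversalPrefixMachine

variable (U : UniversalPrefixMachine)

/-- Conditional prefix Kolmogorov complexity `K(x|y)`: the length of a shortest
program `p` such that `U` on input `p` with auxiliary information `y` outputs `x`. -/
noncomputable def K {α β : Type*} [Encodable α] [Encodable β] (x : α) (y : β) : ℕ :=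
  sInf { n | ∃ p : BStr, p.length = n ∧ Encodable.encode x ∈ U.U p (Encodable.encode y) }

/-- Unconditional prefix Kolmogorov complexity `K(x) = K(x|ε)`. -/
noncomputable def K₀ {α : Type*} [Encodable α] (x : α) : ℕ := U.K x ([] : BStr)

/-- `E_max(X) = max_{x ∈ X} K(X|x)`. -/
noncomputable def Emax (X : List BStr) : ℕ := sSup { k | ∃ x ∈ X, k = U.K X x }

/-- `E_min(X) = min_{x ∈ X} K(X|x)`. -/
noncomputable def Emin (X : List BStr) : ℕ := sInf { k | ∃ x ∈ X, k = U.K X x }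

end UniversalPrefixMachine

/-- Boolean lexicographic order on binary strings. -/
def blex : BStr → BStr → Bool
  | [], _ => true
  | _ :: _, [] => false
  | a :: as, b :: bs => (!a && b) || (a == b && blex as bs)

/-- Length-increasing lexicographic order on binary strings. -/
def llex (x y : BStr) : Bool :=
  decide (x.length < y.length) || (decide (x.length = y.length) && blex x y)

/-- `ljoin U V` is the list consisting of the elements of `U` and of `V`,
ordered length-increasing lexicographically. -/
def ljoin (X Y : List BStr) : List BStr := (X ++ Y).mergeSort llex

/-- Every natural number is output by some program of `U`, on any auxiliary input. -/
lemma exists_prog (U : UniversalPrefixMachine) (n y : ℕ) : ∃ p : BStr, n ∈ U.U p y := by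
  classical
  set M : BStr → ℕ →. ℕ := fun p _ => bif p.isEmpty then Part.some n else Part.none with hM
  have hMpr : Partrec₂ M := by
    have hc : Computable fun q : BStr × ℕ => q.1.isEmpty := by
      have : Primrec fun q : BStr × ℕ => q.1.isEmpty := by
        have h1 : Primrec fun q : BStr × ℕ => decide (q.1 = ([] : BStr)) :=
          (Primrec.eq.comp .fst (.const ([] : BStr))).decide
        refine h1.of_eq fun q => ?_
        cases q.1 <;> simp
      exact this.to_comp
    exact Partrec.cond hc (Partrec.const' (Part.some n)) Partrec.none
  have hMpf : ∀ (y : ℕ) (p q : BStr), p <+: q → (M p y).Dom → (M q y).Dom → p = q := by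
    intro y p q _ hp hq
    have hp' : p = [] := by
      cases p with
      | nil => rfl
      | cons a l => simp [hM] at hp
    have hq' : q = [] := by
      cases q with
      | nil => rfl
      | cons a l => simp [hM] at hq
    rw [hp', hq']
  obtain ⟨c, hc⟩ := U.universal M hMpr hMpf
  obtain ⟨q, hq, -⟩ := hc [] y n (by simp [hM])
  exact ⟨q, hq⟩

/-- There is a program for `X` given `x` of length exactly `K(X|x)`. -/
lemma exists_shortest (U : UniversalPrefixMachine) (X : List BStr) (x : BStr) :
    ∃ p : BStr, p.length = U.K X x ∧
      Encodable.encode X ∈ U.U p (Encodable.encode x) := by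
  have hne : { n | ∃ p : BStr, p.length = n ∧
      Encodable.encode X ∈ U.U p (Encodable.encode x) }.Nonempty := by
    obtain ⟨p, hp⟩ := exists_prog U (Encodable.encode X) (Encodable.encode x)
    exact ⟨p.length, p, rfl, hp⟩
  exact Nat.sInf_mem hne

lemma K_le_Emax (U : UniversalPrefixMachine) {X : List BStr} {x : BStr} (hx : x ∈ X) :
    U.K X x ≤ U.Emax X := by
  have hsub : { k | ∃ x' ∈ X, k = U.K X x' } ⊆
      ↑(X.toFinset.image fun x' => U.K X x') := by
    rintro k ⟨x', hx', rfl⟩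
    simp only [Finset.coe_image, Set.mem_image, Finset.mem_coe, List.mem_toFinset]
    exact ⟨x', hx', rfl⟩
  have hbdd : BddAbove { k | ∃ x' ∈ X, k = U.K X x' } :=
    ((X.toFinset.image fun x' => U.K X x').finite_toSet.subset hsub).bddAbove
  exact le_csSup hbdd ⟨x, hx, rfl⟩

/-- Kraft's inequality for finite prefix-free sets of binary strings. -/
lemma kraft_finset (F : Finset BStr)
    (hpf : ∀ p ∈ F, ∀ q ∈ F, p <+: q → p = q) :
    ∑ p ∈ F, (2 : ℝ≥0∞) ^ (-(p.length : ℤ)) ≤ 1 := by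
  classical
  set L : ℕ := F.sup List.length with hL
  have hlen : ∀ p ∈ F, p.length ≤ L := fun p hp => Finset.le_sup hp
  set E : BStr → Finset (List.Vector Bool L) :=
    fun p => Finset.univ.filter (fun v => p <+: v.toList) with hE
  -- cardinality of each extension set
  have hcard : ∀ p ∈ F, (E p).card = 2 ^ (L - p.length) := by
    intro p hp
    have : (E p).card = Fintype.card { v : List.Vector Bool L // p <+: v.toList } :=
      (Fintype.card_subtype _).symm
    rw [this]
    have e : { v : List.Vector Bool L // p <+: v.toList } ≃
        List.Vector Bool (L - p.length) :=
      { toFun := fun v => ⟨v.1.toList.drop p.length, by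
          rw [List.length_drop, v.1.toList_length]⟩
        invFun := fun w => ⟨⟨p ++ w.toList, by
          rw [List.length_append, w.toList_length,
            Nat.add_sub_cancel' (hlen p hp)]⟩, ⟨w.toList, rfl⟩⟩
        left_inv := fun v => by
          obtain ⟨t, ht⟩ := v.2
          apply Subtype.ext
          apply List.Vector.toList_injective
          simp only [List.Vector.toList_mk]
          rw [← ht, List.drop_left]
        right_inv := fun w => by
          apply List.Vector.toList_injective
          simp only [List.Vector.toList_mk]
          rw [List.drop_left] }
    rw [Fintype.card_congr e, card_vector, Fintype.card_bool]
  -- disjointness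
  have hdisj : ∀ p ∈ F, ∀ q ∈ F, p ≠ q → Disjoint (E p) (E q) := by
    intro p hp q hq hne
    refine Finset.disjoint_left.mpr fun v hv hv' => ?_
    simp only [hE, Finset.mem_filter] at hv hv'
    rcases List.prefix_or_prefix_of_prefix hv.2 hv'.2 with h | h
    · exact hne (hpf p hp q hq h)
    · exact hne ((hpf q hq p hp h).symm)
  have hsum : ∑ p ∈ F, 2 ^ (L - p.length) ≤ 2 ^ L := by
    calc ∑ p ∈ F, 2 ^ (L - p.length) = ∑ p ∈ F, (E p).card :=
          Finset.sum_congr rfl fun p hp => (hcard p hp).symm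
      _ = (F.biUnion E).card := (Finset.card_biUnion hdisj).symm
      _ ≤ Fintype.card (List.Vector Bool L) := Finset.card_le_univ _
      _ = 2 ^ L := by rw [card_vector, Fintype.card_bool]
  -- convert to ℝ≥0∞
  have h2 : (2 : ℝ≥0∞) ≠ 0 := by norm_num
  have h2' : (2 : ℝ≥0∞) ≠ ⊤ := by norm_num
  have key : ∀ p ∈ F, (2 : ℝ≥0∞) ^ (-(p.length : ℤ)) =
      ((2 ^ (L - p.length) : ℕ) : ℝ≥0∞) * (2 : ℝ≥0∞) ^ (-(L : ℤ)) := by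
    intro p hp
    have h1 : ((L - p.length : ℕ) : ℤ) = (L : ℤ) - (p.length : ℤ) :=
      Int.ofNat_sub (hlen p hp)
    rw [Nat.cast_pow, Nat.cast_ofNat, ← zpow_natCast (2 : ℝ≥0∞) (L - p.length),
      ← ENNReal.zpow_add h2 h2']
    congr 1
    rw [h1]; ring
  calc ∑ p ∈ F, (2 : ℝ≥0∞) ^ (-(p.length : ℤ))
      = ∑ p ∈ F, ((2 ^ (L - p.length) : ℕ) : ℝ≥0∞) * (2 : ℝ≥0∞) ^ (-(L : ℤ)) :=
        Finset.sum_congr rfl key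
    _ = ((∑ p ∈ F, 2 ^ (L - p.length) : ℕ) : ℝ≥0∞) * (2 : ℝ≥0∞) ^ (-(L : ℤ)) := by
        rw [← Finset.sum_mul, Nat.cast_sum]
    _ ≤ ((2 ^ L : ℕ) : ℝ≥0∞) * (2 : ℝ≥0∞) ^ (-(L : ℤ)) :=
        mul_le_mul_left (Nat.cast_le.mpr hsum) _
    _ = 1 := by
        rw [Nat.cast_pow, Nat.cast_ofNat, ← zpow_natCast (2 : ℝ≥0∞) L,
          ← ENNReal.zpow_add h2 h2']
        simp

/-- density condition for `E_max`: for every binary string `x`, the sum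
of `2^{-E_max(X)}` over all finite lists `X` of at least two binary strings, not all
equal, containing `x`, with `E_max(X) > 0`, is at most `1`. -/
theorem Emax_density (U : UniversalPrefixMachine) (x : BStr) :
    ∑' X : { X : List BStr //
        x ∈ X ∧ 2 ≤ X.length ∧ (∃ u ∈ X, ∃ v ∈ X, u ≠ v) ∧ 0 < U.Emax X },
      (2 : ℝ≥0∞) ^ (-(U.Emax X.1 : ℤ)) ≤ 1 := by
  classical
  set I := { X : List BStr //
      x ∈ X ∧ 2 ≤ X.length ∧ (∃ u ∈ X, ∃ v ∈ X, u ≠ v) ∧ 0 < U.Emax X } with hI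
  have hex : ∀ X : I, ∃ p : BStr,
      Encodable.encode X.1 ∈ U.U p (Encodable.encode x) ∧ p.length ≤ U.Emax X.1 := by
    intro X
    obtain ⟨p, hplen, hpmem⟩ := exists_shortest U X.1 x
    exact ⟨p, hpmem, hplen ▸ K_le_Emax U X.2.1⟩
  choose f hfmem hflen using hex
  have hfinj : Function.Injective f := by
    intro i j hij
    have h1 := hfmem i
    have h2 := hfmem j
    rw [hij] at h1
    have := Part.mem_unique h1 h2
    exact Subtype.ext (Encodable.encode_injective this)
  refine tsum_le_of_sum_le' zero_le_one fun s => ?_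
  calc ∑ i ∈ s, (2 : ℝ≥0∞) ^ (-(U.Emax i.1 : ℤ))
      ≤ ∑ i ∈ s, (2 : ℝ≥0∞) ^ (-((f i).length : ℤ)) := by
        refine Finset.sum_le_sum fun i _ => ?_
        apply ENNReal.zpow_le_of_le (by norm_num)
        exact neg_le_neg (by exact_mod_cast hflen i)
    _ = ∑ p ∈ s.image f, (2 : ℝ≥0∞) ^ (-(p.length : ℤ)) :=
        (Finset.sum_image (f := fun p : BStr => (2 : ℝ≥0∞) ^ (-(p.length : ℤ)))
          (fun i _ j _ h => hfinj h)).symm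
    _ ≤ 1 := by
        refine kraft_finset (s.image f) fun p hp q hq hpq => ?_
        simp only [Finset.mem_image] at hp hq
        obtain ⟨i, -, rfl⟩ := hp
        obtain ⟨j, -, rfl⟩ := hq
        exact U.prefixFree (Encodable.encode x) _ _ hpq
          (Part.dom_iff_mem.mpr ⟨_, hfmem i⟩) (Part.dom_iff_mem.mpr ⟨_, hfmem j⟩)
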